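/- Let k, p, q and r be positive integers. Let S and T be balanced rooted binary phylogenetic trees on p·2^k and q·2^k leaves respectively, where S consists of p pendant subtrees S_1, ..., S_p each of size 2^k and T consists of q pendant subtrees T_1, ..., T_q each of size 2^k. Suppose that (i) for all i, j, the label sets of S_i and T_j intersect in exactly r elements, and (ii) for all i, j, the restrictions S_i|(L(S_i) ∩ L(T_j)) and T_j|(L(S_i) ∩ L(T_j)) form a pair of anti-caterpillars. Then mast(S, T) ≤ 2 · max{p, q}. -/

import Mathlib

/-!
Rooted binary phylogenetic trees, restrictions, agreement subtrees, and
maximum agreement subtrees (MASTs), following Martin–Thatte style definitions.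
-/

namespace PhyloMAST

/-- A rooted binary tree with leaves labelled by `α`. -/
inductive PTree (α : Type) : Type
  | leaf : α → PTree α
  | node : PTree α → PTree α → PTree α

namespace PTree

variable {α β : Type}

/-- The list of leaf labels, read left to right. -/
def leafList : PTree α → List α
  | leaf x => [x]
  | node l r => leafList l ++ leafList r

/-- The set of leaf labels. -/
def leaves [DecidableEq α] (t : PTree α) : Finset α := t.leafList.toFinset

/-- The height: number of edges on a longest root-to-leaf path. -/
def height : PTree α → ℕ
  | leaf _ => 0
  | node l r => max (height l) (height r) + 1

/-- `t` is a genuine phylogenetic tree: its leaf labels are pairwise distinct. -/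
def Phylo (t : PTree α) : Prop := t.leafList.Nodup

/-- `t` is balanced: its number of leaves is `2 ^ height`. -/
def Balanced (t : PTree α) : Prop := t.leafList.length = 2 ^ t.height

/-- The restriction `t|Y`: the minimal subtree connecting the leaves in `Y`
with all non-root degree-two vertices suppressed; `none` if no leaf of `t`
lies in `Y`. -/
def restrict [DecidableEq α] : PTree α → Finset α → Option (PTree α)
  | leaf x, Y => if x ∈ Y then some (leaf x) else none
  | node l r, Y =>
    match restrict l Y, restrict r Y with
    | some l', some r' => some (node l' r')
    | some l', none => some l'
    | none, some r' => some r'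
    | none, none => none

/-- Isomorphism of leaf-labelled rooted binary trees (children are unordered). -/
inductive Iso : PTree α → PTree α → Prop
  | leaf (x : α) : Iso (leaf x) (leaf x)
  | node {a b c d : PTree α} : Iso a c → Iso b d → Iso (node a b) (node c d)
  | swap {a b c d : PTree α} : Iso a d → Iso b c → Iso (node a b) (node c d)

/-- `Agree S T Y`: the set `Y` induces an agreement subtree of `S` and `T`. -/
def Agree [DecidableEq α] (S T : PTree α) (Y : Finset α) : Prop :=
  Y ⊆ S.leaves ∩ T.leaves ∧
    ∃ S' T', S.restrict Y = some S' ∧ T.restrict Y = some T' ∧ Iso S' T'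

/-- `mast S T`: the maximum size of an agreement subtree of `S` and `T`. -/
noncomputable def mast [DecidableEq α] (S T : PTree α) : ℕ :=
  sSup {k | ∃ Y : Finset α, Agree S T Y ∧ Y.card = k}

/-- The caterpillar tree `(l₁, l₂, …, lₙ)` built from a (nonempty) list:
`l₁` and `l₂` share a parent, and each later leaf hangs off the path to the
root, which is adjacent to the last leaf. -/
def catList [Inhabited α] : List α → PTree α
  | [] => leaf default
  | x :: xs => xs.foldl (fun t y => node t (leaf y)) (leaf x)

/-- `T` embeds the phylogenetic tree `T'`: the label set of `T'` is contained
in that of `T`, and the restriction of `T` to it is isomorphic to `T'`. -/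
def Embeds [DecidableEq α] (T T' : PTree α) : Prop :=
  T'.leaves ⊆ T.leaves ∧ ∃ R, T.restrict T'.leaves = some R ∧ Iso R T'

/-- `Subtree s t`: `s` is a (pendant) subtree of `t` (possibly `t` itself). -/
inductive Subtree : PTree α → PTree α → Prop
  | refl (t : PTree α) : Subtree t t
  | left {s l r : PTree α} : Subtree s l → Subtree s (node l r)
  | right {s l r : PTree α} : Subtree s r → Subtree s (node l r)

/-- The pendant subtrees rooted at depth `k`, read left to right. -/
def subtreesAt : ℕ → PTree α → List (PTree α)
  | 0, t => [t]
  | _ + 1, leaf x => [leaf x]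
  | k + 1, node l r => subtreesAt k l ++ subtreesAt k r

/-- Two trees have the same unlabelled shape (a labelling of the second
yields the first). -/
inductive SameShape : PTree α → PTree β → Prop
  | leaf (x : α) (y : β) : SameShape (leaf x) (leaf y)
  | node {a b : PTree α} {c d : PTree β} :
      SameShape a c → SameShape b d → SameShape (node a b) (node c d)

end PTree

end PhyloMAST

namespace PhyloMAST
namespace PTree
variable {α : Type}

theorem leafList_ne_nil : ∀ (t : PTree α), t.leafList ≠ []
  | leaf x => by simp [leafList]
  | node l r => by
      simp only [leafList, ne_eq, List.append_eq_nil_iff]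
      exact fun h => leafList_ne_nil l h.1

theorem Subtree.trans {a b c : PTree α} (h1 : Subtree a b) (h2 : Subtree b c) :
    Subtree a c := by
  induction h2 with
  | refl => exact h1
  | left _ ih => exact Subtree.left ih
  | right _ ih => exact Subtree.right ih

theorem Subtree.sublist {s t : PTree α} (h : Subtree s t) :
    s.leafList.Sublist t.leafList := by
  induction h with
  | refl => exact List.Sublist.refl _
  | left _ ih => exact ih.trans (List.sublist_append_left _ _)
  | right _ ih => exact ih.trans (List.sublist_append_right _ _)

theorem Phylo.subtree {s t : PTree α} (ht : Phylo t) (h : Subtree s t) : Phylo s :=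
  List.Nodup.sublist h.sublist ht

theorem Iso.perm {a b : PTree α} (h : Iso a b) : a.leafList.Perm b.leafList := by
  induction h with
  | leaf x => exact List.Perm.refl _
  | node _ _ ih1 ih2 => exact ih1.append ih2
  | swap _ _ ih1 ih2 =>
      exact (ih1.append ih2).trans (List.perm_append_comm)

theorem Iso.refl : ∀ (t : PTree α), Iso t t
  | PTree.leaf x => Iso.leaf x
  | PTree.node l r => Iso.node (Iso.refl l) (Iso.refl r)

theorem Iso.symm {a b : PTree α} (h : Iso a b) : Iso b a := by
  induction h with
  | leaf x => exact Iso.leaf x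
  | node _ _ ih1 ih2 => exact Iso.node ih1 ih2
  | swap _ _ ih1 ih2 => exact Iso.swap ih2 ih1

theorem Iso.trans {a b c : PTree α} (h1 : Iso a b) (h2 : Iso b c) : Iso a c := by
  induction h1 generalizing c with
  | leaf x => exact h2
  | node _ _ ih1 ih2 =>
      cases h2 with
      | node g1 g2 => exact Iso.node (ih1 g1) (ih2 g2)
      | swap g1 g2 => exact Iso.swap (ih1 g1) (ih2 g2)
  | swap _ _ ih1 ih2 =>
      cases h2 with
      | node g1 g2 => exact Iso.swap (ih1 g2) (ih2 g1)
      | swap g1 g2 => exact Iso.node (ih1 g2) (ih2 g1)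


section Restrict
variable [DecidableEq α]

theorem mem_leaves {x : α} {t : PTree α} : x ∈ t.leaves ↔ x ∈ t.leafList :=
  List.mem_toFinset

theorem restrict_node_eq (l r : PTree α) (Y : Finset α) :
    (node l r).restrict Y = match l.restrict Y, r.restrict Y with
      | some l', some r' => some (node l' r')
      | some l', none => some l'
      | none, some r' => some r'
      | none, none => none := rfl

theorem restrict_leafList : ∀ (t : PTree α) (Y : Finset α),
    (t.restrict Y).elim [] leafList = t.leafList.filter (· ∈ Y)
  | leaf x, Y => by
      by_cases h : x ∈ Y <;> simp [restrict, leafList, h]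
  | node l r, Y => by
      have hl := restrict_leafList l Y
      have hr := restrict_leafList r Y
      rw [restrict_node_eq]
      cases h1 : l.restrict Y <;> cases h2 : r.restrict Y <;>
        rw [h1] at hl <;> rw [h2] at hr <;>
        simp_all [leafList, List.filter_append]

theorem restrict_some_leafList {t u : PTree α} {Y : Finset α}
    (h : t.restrict Y = some u) : u.leafList = t.leafList.filter (· ∈ Y) := by
  have := restrict_leafList t Y
  rw [h] at this
  exact this

theorem restrict_eq_none_iff {t : PTree α} {Y : Finset α} :
    t.restrict Y = none ↔ ∀ x ∈ t.leafList, x ∉ Y := by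
  constructor
  · intro h
    have := restrict_leafList t Y
    rw [h] at this
    simpa using (List.filter_eq_nil_iff.mp this.symm)
  · intro h
    cases hu : t.restrict Y with
    | none => rfl
    | some u =>
        exfalso
        have hu' := restrict_some_leafList hu
        have hne := leafList_ne_nil u
        rw [hu'] at hne
        rcases List.exists_mem_of_ne_nil _ hne with ⟨x, hx⟩
        rw [List.mem_filter] at hx
        exact h x hx.1 (by simpa using hx.2)

theorem restrict_isSome {t : PTree α} {Y : Finset α} {x : α}
    (hx : x ∈ t.leafList) (hxY : x ∈ Y) : ∃ u, t.restrict Y = some u := by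
  cases hu : t.restrict Y with
  | none => exact absurd hxY (restrict_eq_none_iff.mp hu x hx)
  | some u => exact ⟨u, rfl⟩

theorem restrict_congr : ∀ (t : PTree α) (Y Z : Finset α),
    (∀ x ∈ t.leafList, (x ∈ Y ↔ x ∈ Z)) → t.restrict Y = t.restrict Z
  | leaf x, Y, Z, h => by
      have := h x (by simp [leafList])
      simp only [restrict]
      by_cases hx : x ∈ Y
      · rw [if_pos hx, if_pos (this.mp hx)]
      · rw [if_neg hx, if_neg (fun hz => hx (this.mpr hz))]
  | node l r, Y, Z, h => by
      have hl := restrict_congr l Y Z (fun x hx => h x (by simp [leafList, hx]))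
      have hr := restrict_congr r Y Z (fun x hx => h x (by simp [leafList, hx]))
      rw [restrict_node_eq, restrict_node_eq, hl, hr]

theorem restrict_all {t : PTree α} {Y : Finset α}
    (h : ∀ x ∈ t.leafList, x ∈ Y) : t.restrict Y = some t := by
  induction t with
  | leaf x => simp [restrict, h x (by simp [leafList])]
  | node l r ihl ihr =>
      rw [restrict_node_eq, ihl (fun x hx => h x (by simp [leafList, hx])),
        ihr (fun x hx => h x (by simp [leafList, hx]))]

theorem restrict_restrict {Y Z : Finset α} (hYZ : Y ⊆ Z) :
    ∀ {t u : PTree α}, t.restrict Z = some u → u.restrict Y = t.restrict Y := by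
  intro t
  induction t with
  | leaf x =>
      intro u h
      simp only [restrict] at h
      by_cases hx : x ∈ Z
      · rw [if_pos hx] at h
        cases h
        rfl
      · rw [if_neg hx] at h; cases h
  | node l r ihl ihr =>
      intro u h
      rw [restrict_node_eq] at h
      cases h1 : l.restrict Z with
      | none =>
          cases h2 : r.restrict Z with
          | none => rw [h1, h2] at h; cases h
          | some r' =>
              rw [h1, h2] at h
              cases h
              have hln : l.restrict Y = none := by
                rw [restrict_eq_none_iff]
                intro x hx hxY
                exact restrict_eq_none_iff.mp h1 x hx (hYZ hxY)
              rw [ihr h2, restrict_node_eq, hln]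
              cases hry : r.restrict Y <;> rfl
      | some l' =>
          cases h2 : r.restrict Z with
          | none =>
              rw [h1, h2] at h
              cases h
              have hrn : r.restrict Y = none := by
                rw [restrict_eq_none_iff]
                intro x hx hxY
                exact restrict_eq_none_iff.mp h2 x hx (hYZ hxY)
              rw [ihl h1, restrict_node_eq, hrn]
              cases hly : l.restrict Y <;> rfl
          | some r' =>
              rw [h1, h2] at h
              cases h
              rw [restrict_node_eq, restrict_node_eq, ihl h1, ihr h2]

theorem iso_restrict {a b : PTree α} (h : Iso a b) (Y : Finset α) :
    (a.restrict Y = none ∧ b.restrict Y = none) ∨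
      (∃ a' b', a.restrict Y = some a' ∧ b.restrict Y = some b' ∧ Iso a' b') := by
  induction h with
  | leaf x =>
      by_cases hx : x ∈ Y
      · exact Or.inr ⟨leaf x, leaf x, by simp [restrict, hx], by simp [restrict, hx],
          Iso.leaf x⟩
      · exact Or.inl ⟨by simp [restrict, hx], by simp [restrict, hx]⟩
  | @node a b c d h1 h2 ih1 ih2 =>
      rw [restrict_node_eq, restrict_node_eq]
      rcases ih1 with ⟨ha, hc⟩ | ⟨a', c', ha, hc, hiso1⟩ <;>
        rcases ih2 with ⟨hb, hd⟩ | ⟨b', d', hb, hd, hiso2⟩ <;>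
        rw [ha, hc, hb, hd]
      · exact Or.inl ⟨rfl, rfl⟩
      · exact Or.inr ⟨b', d', rfl, rfl, hiso2⟩
      · exact Or.inr ⟨a', c', rfl, rfl, hiso1⟩
      · exact Or.inr ⟨node a' b', node c' d', rfl, rfl, Iso.node hiso1 hiso2⟩
  | @swap a b c d h1 h2 ih1 ih2 =>
      rw [restrict_node_eq, restrict_node_eq]
      rcases ih1 with ⟨ha, hd⟩ | ⟨a', d', ha, hd, hiso1⟩ <;>
        rcases ih2 with ⟨hb, hc⟩ | ⟨b', c', hb, hc, hiso2⟩ <;>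
        rw [ha, hd, hb, hc]
      · exact Or.inl ⟨rfl, rfl⟩
      · exact Or.inr ⟨b', c', rfl, rfl, hiso2⟩
      · exact Or.inr ⟨a', d', rfl, rfl, hiso1⟩
      · exact Or.inr ⟨node a' b', node c' d', rfl, rfl, Iso.swap hiso1 hiso2⟩

end Restrict

inductive Perfect : ℕ → PTree α → Prop
  | leaf (x : α) : Perfect 0 (leaf x)
  | node {n : ℕ} {l r : PTree α} : Perfect n l → Perfect n r →
      Perfect (n + 1) (node l r)

theorem Perfect.length {n : ℕ} {t : PTree α} (h : Perfect n t) :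
    t.leafList.length = 2 ^ n := by
  induction h with
  | leaf x => simp [leafList]
  | node h1 h2 ih1 ih2 => simp [leafList, ih1, ih2, pow_succ]; ring

theorem length_le_two_pow_height : ∀ (t : PTree α),
    t.leafList.length ≤ 2 ^ t.height
  | leaf x => by simp [leafList, height]
  | node l r => by
      have hl := length_le_two_pow_height l
      have hr := length_le_two_pow_height r
      have h2l : (2:ℕ) ^ l.height ≤ 2 ^ (max l.height r.height) :=
        Nat.pow_le_pow_right (by norm_num) (le_max_left _ _)
      have h2r : (2:ℕ) ^ r.height ≤ 2 ^ (max l.height r.height) :=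
        Nat.pow_le_pow_right (by norm_num) (le_max_right _ _)
      simp only [leafList, height, List.length_append, pow_succ]
      omega

theorem Balanced.perfect : ∀ {t : PTree α}, Balanced t → Perfect t.height t := by
  intro t
  induction t with
  | leaf x => intro _; exact Perfect.leaf x
  | node l r ihl ihr =>
      intro hb
      unfold Balanced at hb
      simp only [leafList, height, List.length_append, pow_succ] at hb
      have hl := length_le_two_pow_height l
      have hr := length_le_two_pow_height r
      have h2l : (2:ℕ) ^ l.height ≤ 2 ^ (max l.height r.height) :=
        Nat.pow_le_pow_right (by norm_num) (le_max_left _ _)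
      have h2r : (2:ℕ) ^ r.height ≤ 2 ^ (max l.height r.height) :=
        Nat.pow_le_pow_right (by norm_num) (le_max_right _ _)
      have hleq : l.leafList.length = 2 ^ (max l.height r.height) := by omega
      have hreq : r.leafList.length = 2 ^ (max l.height r.height) := by omega
      have hlh : l.height = max l.height r.height := by
        have : (2:ℕ) ^ (max l.height r.height) ≤ 2 ^ l.height := hleq ▸ hl
        have := (Nat.pow_le_pow_iff_right (by norm_num : 1 < 2)).mp this
        omega
      have hrh : r.height = max l.height r.height := by
        have : (2:ℕ) ^ (max l.height r.height) ≤ 2 ^ r.height := hreq ▸ hr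
        have := (Nat.pow_le_pow_iff_right (by norm_num : 1 < 2)).mp this
        omega
      have hPl : Perfect l.height l := ihl (by unfold Balanced; omega)
      have hPr : Perfect r.height r := ihr (by unfold Balanced; omega)
      show Perfect (max l.height r.height + 1) (node l r)
      exact Perfect.node (hlh ▸ hPl) (hrh ▸ hPr)

theorem Subtree.perfect {s t : PTree α} {n : ℕ} (h : Subtree s t)
    (hp : Perfect n t) : ∃ m, m ≤ n ∧ Perfect m s := by
  induction h generalizing n with
  | refl => exact ⟨n, le_rfl, hp⟩
  | left _ ih =>
      cases hp with
      | node h1 h2 =>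
          obtain ⟨m, hm, hps⟩ := ih h1
          exact ⟨m, by omega, hps⟩
  | right _ ih =>
      cases hp with
      | node h1 h2 =>
          obtain ⟨m, hm, hps⟩ := ih h2
          exact ⟨m, by omega, hps⟩

theorem phylo_node_disjoint {l r : PTree α} (h : Phylo (node l r)) :
    ∀ x ∈ l.leafList, x ∉ r.leafList := by
  have := (List.nodup_append'.mp h).2.2
  exact fun x hx hx' => this hx hx'

theorem subtree_laminar {t : PTree α} (ht : Phylo t) :
    ∀ {a b : PTree α}, Subtree a t → Subtree b t →
      (∀ x ∈ a.leafList, x ∈ b.leafList) ∨ (∀ x ∈ b.leafList, x ∈ a.leafList) ∨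
        (∀ x ∈ a.leafList, x ∉ b.leafList) := by
  induction t with
  | leaf x =>
      intro a b ha hb
      cases ha; cases hb
      exact Or.inl fun x hx => hx
  | node l r ihl ihr =>
      intro a b ha hb
      have hdisj := phylo_node_disjoint ht
      have hl : Phylo l := ht.subtree (Subtree.left (Subtree.refl l))
      have hr : Phylo r := ht.subtree (Subtree.right (Subtree.refl r))
      cases ha with
      | refl => exact Or.inr (Or.inl fun x hx => hb.sublist.mem hx)
      | left ha' =>
          cases hb with
          | refl => exact Or.inl fun x hx => (Subtree.left ha' : Subtree a _).sublist.mem hx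
          | left hb' => exact ihl hl ha' hb'
          | right hb' =>
              exact Or.inr (Or.inr fun x hx hx' =>
                hdisj x (ha'.sublist.mem hx) (hb'.sublist.mem hx'))
      | right ha' =>
          cases hb with
          | refl => exact Or.inl fun x hx => (Subtree.right ha' : Subtree a _).sublist.mem hx
          | left hb' =>
              exact Or.inr (Or.inr fun x hx hx' =>
                hdisj x (hb'.sublist.mem hx') (ha'.sublist.mem hx))
          | right hb' => exact ihr hr ha' hb'

theorem subtree_eq_of_leafList {t : PTree α} (ht : Phylo t) :
    ∀ {a b : PTree α}, Subtree a t → Subtree b t →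
      (∀ x, x ∈ a.leafList ↔ x ∈ b.leafList) → a = b := by
  induction t with
  | leaf x =>
      intro a b ha hb _
      cases ha; cases hb; rfl
  | node l r ihl ihr =>
      intro a b ha hb hab
      have hdisj := phylo_node_disjoint ht
      have hl : Phylo l := ht.subtree (Subtree.left (Subtree.refl l))
      have hr : Phylo r := ht.subtree (Subtree.right (Subtree.refl r))
      have hlne := leafList_ne_nil l
      have hrne := leafList_ne_nil r
      obtain ⟨xl, hxl⟩ := List.exists_mem_of_ne_nil _ hlne
      obtain ⟨xr, hxr⟩ := List.exists_mem_of_ne_nil _ hrne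
      cases ha with
      | refl =>
          cases hb with
          | refl => rfl
          | left hb' =>
              exfalso
              have : xr ∈ b.leafList := (hab xr).mp (by simp [leafList, hxr])
              exact hdisj xr (hb'.sublist.mem this) hxr
          | right hb' =>
              exfalso
              have : xl ∈ b.leafList := (hab xl).mp (by simp [leafList, hxl])
              exact hdisj xl hxl (hb'.sublist.mem this)
      | left ha' =>
          cases hb with
          | refl =>
              exfalso
              have : xr ∈ a.leafList := (hab xr).mpr (by simp [leafList, hxr])
              exact hdisj xr (ha'.sublist.mem this) hxr
          | left hb' => exact ihl hl ha' hb' hab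
          | right hb' =>
              exfalso
              obtain ⟨y, hy⟩ := List.exists_mem_of_ne_nil _ (leafList_ne_nil a)
              exact hdisj y (ha'.sublist.mem hy) (hb'.sublist.mem ((hab y).mp hy))
      | right ha' =>
          cases hb with
          | refl =>
              exfalso
              have : xl ∈ a.leafList := (hab xl).mpr (by simp [leafList, hxl])
              exact hdisj xl hxl (ha'.sublist.mem this)
          | left hb' =>
              exfalso
              obtain ⟨y, hy⟩ := List.exists_mem_of_ne_nil _ (leafList_ne_nil a)
              exact hdisj y (hb'.sublist.mem ((hab y).mp hy)) (ha'.sublist.mem hy)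
          | right hb' => exact ihr hr ha' hb' hab

set_option linter.unusedSectionVars false

section Cat
variable [DecidableEq α] [Inhabited α]

theorem leafList_foldl : ∀ (l : List α) (t : PTree α),
    (l.foldl (fun t y => node t (leaf y)) t).leafList = t.leafList ++ l
  | [], t => by simp
  | y :: ys, t => by
      rw [List.foldl_cons, leafList_foldl ys]
      simp [leafList]

theorem leafList_catList (x : α) (xs : List α) :
    (catList (x :: xs)).leafList = x :: xs := by
  rw [catList, leafList_foldl]
  simp [leafList]

/-- Auxiliary fold on options used to describe restrictions of caterpillars. -/
def optFold : Option (PTree α) → List α → Option (PTree α)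
  | o, [] => o
  | none, y :: ys => optFold (some (leaf y)) ys
  | some t, y :: ys => optFold (some (node t (leaf y))) ys

theorem optFold_nil (o : Option (PTree α)) : optFold o [] = o := by
  cases o <;> rfl

theorem optFold_some : ∀ (l : List α) (t : PTree α),
    optFold (some t) l = some (l.foldl (fun t y => node t (leaf y)) t)
  | [], t => rfl
  | y :: ys, t => by rw [optFold, optFold_some ys, List.foldl_cons]

theorem restrict_foldl : ∀ (l : List α) (t : PTree α) (Y : Finset α),
    ((l.foldl (fun t y => node t (leaf y)) t).restrict Y) =
      optFold (t.restrict Y) (l.filter (· ∈ Y))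
  | [], t, Y => by rw [List.foldl_nil, List.filter_nil, optFold_nil]
  | y :: ys, t, Y => by
      rw [List.foldl_cons, restrict_foldl ys]
      by_cases hy : y ∈ Y
      · cases ht : t.restrict Y with
        | none =>
            rw [restrict_node_eq, ht]
            simp [restrict, hy, optFold]
        | some t' =>
            rw [restrict_node_eq, ht]
            simp [restrict, hy, optFold]
      · cases ht : t.restrict Y with
        | none =>
            rw [restrict_node_eq, ht]
            simp [restrict, hy]
        | some t' =>
            rw [restrict_node_eq, ht]
            simp [restrict, hy]

theorem restrict_catList (x : α) (xs : List α) (Y : Finset α) :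
    (catList (x :: xs)).restrict Y =
      match (x :: xs).filter (· ∈ Y) with
      | [] => none
      | z :: zs => some (catList (z :: zs)) := by
  rw [catList, restrict_foldl]
  by_cases hx : x ∈ Y
  · rw [List.filter_cons_of_pos (by simpa using hx)]
    simp only [restrict, if_pos hx]
    rw [optFold_some]
    rfl
  · rw [List.filter_cons_of_neg (by simpa using hx)]
    simp only [restrict, if_neg hx]
    cases h : xs.filter (· ∈ Y) with
    | nil => rfl
    | cons z zs =>
        rw [optFold, optFold_some]
        rfl

theorem subtree_foldl_aux : ∀ (l : List α) (s : PTree α),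
    Subtree s (l.foldl (fun t y => node t (leaf y)) s)
  | [], s => Subtree.refl s
  | y :: ys, s => by
      rw [List.foldl_cons]
      exact (Subtree.left (Subtree.refl s) : Subtree s (node s (leaf y))).trans
        (subtree_foldl_aux ys _)

theorem subtree_foldl_cases : ∀ (l : List α) (t s : PTree α),
    Subtree s (l.foldl (fun t y => node t (leaf y)) t) →
      Subtree s t ∨ (∃ y ∈ l, s = leaf y) ∨
        ∃ l₁ y l₂, l = l₁ ++ y :: l₂ ∧
          s = node (l₁.foldl (fun t y => node t (leaf y)) t) (leaf y)
  | [], t, s, h => Or.inl h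
  | y :: ys, t, s, h => by
      rw [List.foldl_cons] at h
      rcases subtree_foldl_cases ys _ s h with h' | ⟨z, hz, rfl⟩ | ⟨l₁, z, l₂, heq, hs⟩
      · cases h' with
        | refl => exact Or.inr (Or.inr ⟨[], y, ys, rfl, rfl⟩)
        | left h'' => exact Or.inl h''
        | right h'' =>
            cases h''
            exact Or.inr (Or.inl ⟨y, by simp, rfl⟩)
      · exact Or.inr (Or.inl ⟨z, by simp [hz], rfl⟩)
      · exact Or.inr (Or.inr ⟨y :: l₁, z, l₂, by simp [heq], by simp [hs]⟩)

theorem subtree_catList_two {x : α} {xs : List α} {s : PTree α}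
    (h : Subtree s (catList (x :: xs))) (hlen : s.leafList.length = 2) :
    ∃ y l₂, xs = y :: l₂ ∧ s = node (leaf x) (leaf y) := by
  rw [catList] at h
  rcases subtree_foldl_cases xs (leaf x) s h with h' | ⟨z, _, rfl⟩ | ⟨l₁, z, l₂, heq, hs⟩
  · cases h'
    simp [leafList] at hlen
  · simp [leafList] at hlen
  · rw [hs] at hlen
    have hl₁ : l₁.length + 2 = 2 := by
      simpa [leafList, leafList_foldl] using hlen
    have hl₁' : l₁ = [] := List.length_eq_zero_iff.mp (by omega)
    subst hl₁'
    exact ⟨z, l₂, by simpa using heq, by simpa using hs⟩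

theorem iso_subtree {u v : PTree α} (h : Iso u v) :
    ∀ {s : PTree α}, Subtree s u → ∃ s', Subtree s' v ∧ s.leafList.Perm s'.leafList := by
  induction h with
  | leaf x =>
      intro s hs
      cases hs
      exact ⟨leaf x, Subtree.refl _, List.Perm.refl _⟩
  | @node a b c d h1 h2 ih1 ih2 =>
      intro s hs
      cases hs with
      | refl => exact ⟨node c d, Subtree.refl _, (Iso.node h1 h2).perm⟩
      | left hs' =>
          obtain ⟨s', hsub, hperm⟩ := ih1 hs'
          exact ⟨s', Subtree.left hsub, hperm⟩
      | right hs' =>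
          obtain ⟨s', hsub, hperm⟩ := ih2 hs'
          exact ⟨s', Subtree.right hsub, hperm⟩
  | @swap a b c d h1 h2 ih1 ih2 =>
      intro s hs
      cases hs with
      | refl => exact ⟨node c d, Subtree.refl _, (Iso.swap h1 h2).perm⟩
      | left hs' =>
          obtain ⟨s', hsub, hperm⟩ := ih1 hs'
          exact ⟨s', Subtree.right hsub, hperm⟩
      | right hs' =>
          obtain ⟨s', hsub, hperm⟩ := ih2 hs'
          exact ⟨s', Subtree.left hsub, hperm⟩

theorem noIso_catList_reverse {m : List α} (hnd : m.Nodup) (hlen : 3 ≤ m.length) :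
    ¬ Iso (catList m) (catList m.reverse) := by
  intro hiso
  match m, hnd, hlen, hiso with
  | a :: b :: c :: ts, hnd, hlen, hiso =>
    have hch : Subtree (node (leaf a) (leaf b)) (catList (a :: b :: c :: ts)) := by
      rw [catList, List.foldl_cons]
      exact subtree_foldl_aux _ _
    obtain ⟨s', hsub', hperm⟩ := iso_subtree hiso hch
    have hlen2 : s'.leafList.length = 2 := by
      simpa [leafList] using hperm.length_eq.symm
    obtain ⟨x, xs, hxeq⟩ : ∃ x xs, (a :: b :: c :: ts).reverse = x :: xs := by
      cases h : (a :: b :: c :: ts).reverse with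
      | nil =>
          exfalso
          have := congrArg List.length h
          simp at this
      | cons x xs => exact ⟨x, xs, rfl⟩
    rw [hxeq] at hsub'
    obtain ⟨y, l₂, rfl, hs'⟩ := subtree_catList_two hsub' hlen2
    have hm : a :: b :: c :: ts = l₂.reverse ++ [y, x] := by
      have := congrArg List.reverse hxeq
      simpa using this
    obtain ⟨u, us, hu⟩ : ∃ u us, l₂.reverse = u :: us := by
      cases h : l₂.reverse with
      | nil =>
          exfalso
          rw [List.reverse_eq_nil_iff] at h
          subst h
          simp at hm
      | cons u us => exact ⟨u, us, rfl⟩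
    rw [hu] at hm
    have hmm : a :: (b :: c :: ts) = u :: (us ++ [y, x]) := by simpa using hm
    obtain ⟨hau, htail⟩ := List.cons_eq_cons.mp hmm
    have hamem : a ∈ [x, y] := by
      have h1 : a ∈ (node (leaf a) (leaf b)).leafList := by simp [leafList]
      have h2 := hperm.mem_iff.mp h1
      rw [hs'] at h2
      simpa [leafList] using h2
    have hamem' : a ∈ us ++ [y, x] := by
      rcases (by simpa using hamem : a = x ∨ a = y) with rfl | rfl <;> simp
    rw [← htail] at hamem'
    rw [List.nodup_cons] at hnd
    exact hnd.1 hamem'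

end Cat

section AgreeLemmas
variable [DecidableEq α]

theorem mem_restrict_leafList {t u : PTree α} {Y : Finset α}
    (h : t.restrict Y = some u) {x : α} :
    x ∈ u.leafList ↔ x ∈ t.leafList ∧ x ∈ Y := by
  rw [restrict_some_leafList h, List.mem_filter]
  simp

theorem agree_symm {S T : PTree α} {Y : Finset α} (h : Agree S T Y) :
    Agree T S Y := by
  obtain ⟨hsub, S', T', hS', hT', hiso⟩ := h
  exact ⟨by rw [Finset.inter_comm]; exact hsub, T', S', hT', hS', hiso.symm⟩

theorem agree_node_left_none {S1 S2 T : PTree α} {Y : Finset α}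
    (h : Agree (node S1 S2) T Y) (h1 : S1.restrict Y = none) : Agree S2 T Y := by
  obtain ⟨hsub, S', T', hS', hT', hiso⟩ := h
  refine ⟨?_, S', T', ?_, hT', hiso⟩
  · intro x hx
    have hx' := hsub hx
    rw [Finset.mem_inter] at hx' ⊢
    refine ⟨?_, hx'.2⟩
    have hx1 := hx'.1
    rw [mem_leaves] at hx1
    simp only [leafList, List.mem_append] at hx1
    rcases hx1 with h' | h'
    · exact absurd hx (restrict_eq_none_iff.mp h1 x h')
    · exact mem_leaves.mpr h'
  · rw [restrict_node_eq, h1] at hS'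
    cases h2 : S2.restrict Y with
    | none => rw [h2] at hS'; cases hS'
    | some u => rw [h2] at hS'; exact hS'

theorem agree_node_right_none {S1 S2 T : PTree α} {Y : Finset α}
    (h : Agree (node S1 S2) T Y) (h2 : S2.restrict Y = none) : Agree S1 T Y := by
  obtain ⟨hsub, S', T', hS', hT', hiso⟩ := h
  refine ⟨?_, S', T', ?_, hT', hiso⟩
  · intro x hx
    have hx' := hsub hx
    rw [Finset.mem_inter] at hx' ⊢
    refine ⟨?_, hx'.2⟩
    have hx1 := hx'.1
    rw [mem_leaves] at hx1
    simp only [leafList, List.mem_append] at hx1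
    rcases hx1 with h' | h'
    · exact mem_leaves.mpr h'
    · exact absurd hx (restrict_eq_none_iff.mp h2 x h')
  · rw [restrict_node_eq, h2] at hS'
    cases h1 : S1.restrict Y with
    | none => rw [h1] at hS'; cases hS'
    | some u => rw [h1] at hS'; exact hS'

theorem agree_snd_left_none {S T1 T2 : PTree α} {Y : Finset α}
    (h : Agree S (node T1 T2) Y) (h1 : T1.restrict Y = none) : Agree S T2 Y :=
  agree_symm (agree_node_left_none (agree_symm h) h1)

theorem agree_snd_right_none {S T1 T2 : PTree α} {Y : Finset α}
    (h : Agree S (node T1 T2) Y) (h2 : T2.restrict Y = none) : Agree S T1 Y :=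
  agree_symm (agree_node_right_none (agree_symm h) h2)

theorem iso_node_inv {A1 A2 B : PTree α} (h : Iso (node A1 A2) B) :
    ∃ B1 B2, B = node B1 B2 ∧
      ((Iso A1 B1 ∧ Iso A2 B2) ∨ (Iso A1 B2 ∧ Iso A2 B1)) := by
  cases h with
  | node h1 h2 => exact ⟨_, _, rfl, Or.inl ⟨h1, h2⟩⟩
  | swap h1 h2 => exact ⟨_, _, rfl, Or.inr ⟨h1, h2⟩⟩

theorem card_split {S1 S2 : PTree α} {Y : Finset α}
    (hphy : Phylo (node S1 S2)) (hsub : ∀ x ∈ Y, x ∈ (node S1 S2).leaves) :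
    Y.card = (Y ∩ S1.leaves).card + (Y ∩ S2.leaves).card := by
  have hdisj := phylo_node_disjoint hphy
  rw [← Finset.card_union_of_disjoint]
  · congr 1
    ext x
    simp only [Finset.mem_union, Finset.mem_inter, mem_leaves]
    constructor
    · intro hx
      have := hsub x hx
      rw [mem_leaves] at this
      simp only [leafList, List.mem_append] at this
      tauto
    · tauto
  · rw [Finset.disjoint_left]
    intro x hx1 hx2
    rw [Finset.mem_inter, mem_leaves] at hx1 hx2
    exact hdisj x hx1.2 hx2.2

theorem agree_split {S1 S2 T A1 A2 B : PTree α} {Y : Finset α}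
    (hphy : Phylo (node S1 S2))
    (hAg : Agree (node S1 S2) T Y)
    (h1 : S1.restrict Y = some A1) (h2 : S2.restrict Y = some A2)
    (hTB : T.restrict Y = some B) :
    ∃ B1 B2 D1 D2, B = node B1 B2 ∧
      ((D1 = B1 ∧ D2 = B2) ∨ (D1 = B2 ∧ D2 = B1)) ∧
      Agree S1 T (Y ∩ S1.leaves) ∧ Agree S2 T (Y ∩ S2.leaves) ∧
      T.restrict (Y ∩ S1.leaves) = some D1 ∧ Iso A1 D1 ∧
      T.restrict (Y ∩ S2.leaves) = some D2 ∧ Iso A2 D2 := by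
  obtain ⟨hsub, S', T', hS', hT', hiso⟩ := hAg
  have hS'eq : S' = node A1 A2 := by
    rw [restrict_node_eq, h1, h2] at hS'
    exact (Option.some_injective _ hS').symm
  have hB : T' = B := by rw [hTB] at hT'; exact (Option.some_injective _ hT').symm
  subst hS'eq; subst hB
  obtain ⟨B1, B2, rfl, hpair⟩ := iso_node_inv hiso
  have hdisj := phylo_node_disjoint hphy
  -- membership characterizations
  have hmemA1 : ∀ x, x ∈ A1.leafList ↔ x ∈ S1.leafList ∧ x ∈ Y :=
    fun x => mem_restrict_leafList h1
  have hmemA2 : ∀ x, x ∈ A2.leafList ↔ x ∈ S2.leafList ∧ x ∈ Y :=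
    fun x => mem_restrict_leafList h2
  have hY1sub : ∀ x ∈ (Y ∩ S1.leaves), x ∈ Y := fun x hx => (Finset.mem_inter.mp hx).1
  have hY2sub : ∀ x ∈ (Y ∩ S2.leaves), x ∈ Y := fun x hx => (Finset.mem_inter.mp hx).1
  -- restriction of S1 to Y ∩ S1.leaves
  have hres1 : S1.restrict (Y ∩ S1.leaves) = some A1 := by
    rw [restrict_congr S1 (Y ∩ S1.leaves) Y
      (fun x hx => by simp [Finset.mem_inter, mem_leaves, hx])]
    exact h1
  have hres2 : S2.restrict (Y ∩ S2.leaves) = some A2 := by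
    rw [restrict_congr S2 (Y ∩ S2.leaves) Y
      (fun x hx => by simp [Finset.mem_inter, mem_leaves, hx])]
    exact h2
  -- T restricted to the pieces
  have hTb1 : (node B1 B2).restrict (Y ∩ S1.leaves) = T.restrict (Y ∩ S1.leaves) :=
    restrict_restrict (fun x hx => hY1sub x hx) hTB
  have hTb2 : (node B1 B2).restrict (Y ∩ S2.leaves) = T.restrict (Y ∩ S2.leaves) :=
    restrict_restrict (fun x hx => hY2sub x hx) hTB
  have hsub' : ∀ x ∈ Y, x ∈ T.leaves := fun x hx => (Finset.mem_inter.mp (hsub hx)).2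
  rcases hpair with ⟨hi1, hi2⟩ | ⟨hi1, hi2⟩
  · -- D1 = B1, D2 = B2
    have hmemB1 : ∀ x, x ∈ B1.leafList ↔ x ∈ S1.leafList ∧ x ∈ Y := by
      intro x
      rw [← hi1.perm.mem_iff]
      exact hmemA1 x
    have hmemB2 : ∀ x, x ∈ B2.leafList ↔ x ∈ S2.leafList ∧ x ∈ Y := by
      intro x
      rw [← hi2.perm.mem_iff]
      exact hmemA2 x
    have hrB1 : (node B1 B2).restrict (Y ∩ S1.leaves) = some B1 := by
      rw [restrict_node_eq]
      rw [restrict_all (t := B1) (fun x hx => by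
        rcases (hmemB1 x).mp hx with ⟨hxs, hxy⟩
        exact Finset.mem_inter.mpr ⟨hxy, mem_leaves.mpr hxs⟩)]
      rw [restrict_eq_none_iff.mpr (fun x hx hx' => by
        rcases (hmemB2 x).mp hx with ⟨hxs, _⟩
        rcases Finset.mem_inter.mp hx' with ⟨_, hxl⟩
        exact hdisj x (mem_leaves.mp hxl) hxs)]
    have hrB2 : (node B1 B2).restrict (Y ∩ S2.leaves) = some B2 := by
      rw [restrict_node_eq]
      rw [restrict_all (t := B2) (fun x hx => by
        rcases (hmemB2 x).mp hx with ⟨hxs, hxy⟩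
        exact Finset.mem_inter.mpr ⟨hxy, mem_leaves.mpr hxs⟩)]
      rw [restrict_eq_none_iff.mpr (fun x hx hx' => by
        rcases (hmemB1 x).mp hx with ⟨hxs, _⟩
        rcases Finset.mem_inter.mp hx' with ⟨_, hxl⟩
        exact hdisj x hxs (mem_leaves.mp hxl))]
    refine ⟨B1, B2, B1, B2, rfl, Or.inl ⟨rfl, rfl⟩, ?_, ?_, hTb1 ▸ hrB1, hi1,
      hTb2 ▸ hrB2, hi2⟩
    · exact ⟨fun x hx => Finset.mem_inter.mpr
        ⟨(Finset.mem_inter.mp hx).2, hsub' x (hY1sub x hx)⟩,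
        A1, B1, hres1, hTb1 ▸ hrB1, hi1⟩
    · exact ⟨fun x hx => Finset.mem_inter.mpr
        ⟨(Finset.mem_inter.mp hx).2, hsub' x (hY2sub x hx)⟩,
        A2, B2, hres2, hTb2 ▸ hrB2, hi2⟩
  · -- D1 = B2, D2 = B1
    have hmemB2 : ∀ x, x ∈ B2.leafList ↔ x ∈ S1.leafList ∧ x ∈ Y := by
      intro x
      rw [← hi1.perm.mem_iff]
      exact hmemA1 x
    have hmemB1 : ∀ x, x ∈ B1.leafList ↔ x ∈ S2.leafList ∧ x ∈ Y := by
      intro x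
      rw [← hi2.perm.mem_iff]
      exact hmemA2 x
    have hrB2 : (node B1 B2).restrict (Y ∩ S1.leaves) = some B2 := by
      rw [restrict_node_eq]
      rw [restrict_all (t := B2) (fun x hx => by
        rcases (hmemB2 x).mp hx with ⟨hxs, hxy⟩
        exact Finset.mem_inter.mpr ⟨hxy, mem_leaves.mpr hxs⟩)]
      rw [restrict_eq_none_iff.mpr (fun x hx hx' => by
        rcases (hmemB1 x).mp hx with ⟨hxs, _⟩
        rcases Finset.mem_inter.mp hx' with ⟨_, hxl⟩
        exact hdisj x (mem_leaves.mp hxl) hxs)]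
    have hrB1 : (node B1 B2).restrict (Y ∩ S2.leaves) = some B1 := by
      rw [restrict_node_eq]
      rw [restrict_all (t := B1) (fun x hx => by
        rcases (hmemB1 x).mp hx with ⟨hxs, hxy⟩
        exact Finset.mem_inter.mpr ⟨hxy, mem_leaves.mpr hxs⟩)]
      rw [restrict_eq_none_iff.mpr (fun x hx hx' => by
        rcases (hmemB2 x).mp hx with ⟨hxs, _⟩
        rcases Finset.mem_inter.mp hx' with ⟨_, hxl⟩
        exact hdisj x hxs (mem_leaves.mp hxl))]
    refine ⟨B1, B2, B2, B1, rfl, Or.inr ⟨rfl, rfl⟩, ?_, ?_, hTb1 ▸ hrB2, hi1,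
      hTb2 ▸ hrB1, hi2⟩
    · exact ⟨fun x hx => Finset.mem_inter.mpr
        ⟨(Finset.mem_inter.mp hx).2, hsub' x (hY1sub x hx)⟩,
        A1, B2, hres1, hTb1 ▸ hrB2, hi1⟩
    · exact ⟨fun x hx => Finset.mem_inter.mpr
        ⟨(Finset.mem_inter.mp hx).2, hsub' x (hY2sub x hx)⟩,
        A2, B1, hres2, hTb2 ▸ hrB1, hi2⟩

end AgreeLemmas

section Key
variable [DecidableEq α] [Inhabited α]

/-- The pair `(s, t)` restricts to a pair of anti-caterpillars. -/
def AntiCat (s t : PTree α) : Prop :=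
  ∃ l : List α, l.Nodup ∧ l.toFinset = s.leaves ∩ t.leaves ∧
    (∃ A, s.restrict (s.leaves ∩ t.leaves) = some A ∧ Iso A (catList l)) ∧
    (∃ B, t.restrict (s.leaves ∩ t.leaves) = some B ∧ Iso B (catList l.reverse))

theorem card_le_two_of_antiCat {s t : PTree α} (h : AntiCat s t)
    {Y : Finset α} (hAg : Agree s t Y) : Y.card ≤ 2 := by
  by_contra hY
  push_neg at hY
  obtain ⟨l, hnd, hl, ⟨A, hA, hisoA⟩, ⟨B, hB, hisoB⟩⟩ := h
  obtain ⟨hsub, S', T', hS', hT', hiso⟩ := hAg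
  have hYI : ∀ x ∈ Y, x ∈ l.toFinset := fun x hx => by rw [hl]; exact hsub hx
  have hAS : A.restrict Y = some S' := by rw [restrict_restrict hsub hA]; exact hS'
  have hBT : B.restrict Y = some T' := by rw [restrict_restrict hsub hB]; exact hT'
  rcases iso_restrict hisoA Y with ⟨hno, _⟩ | ⟨a', c', ha', hc', hisoc⟩
  · rw [hAS] at hno; cases hno
  rcases iso_restrict hisoB Y with ⟨hno, _⟩ | ⟨b', d', hb', hd', hisod⟩
  · rw [hBT] at hno; cases hno
  rw [hAS] at ha'
  rw [hBT] at hb'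
  have haS : S' = a' := Option.some_injective _ ha'
  have hbT : T' = b' := Option.some_injective _ hb'
  subst haS; subst hbT
  -- Y is nonempty, so l is nonempty
  cases l with
  | nil =>
      obtain ⟨y, hy⟩ := Finset.card_pos.mp (by omega : 0 < Y.card)
      have := hYI y hy
      simp at this
  | cons x xs =>
    rw [restrict_catList] at hc'
    cases hf : (x :: xs).filter (· ∈ Y) with
    | nil => rw [hf] at hc'; cases hc'
    | cons z zs =>
      rw [hf] at hc'
      have hc'' : c' = catList (z :: zs) := (Option.some_injective _ hc').symm
      subst hc''
      -- reverse side
      obtain ⟨w, ws, hrev⟩ : ∃ w ws, (x :: xs).reverse = w :: ws := by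
        cases hr : (x :: xs).reverse with
        | nil => rw [List.reverse_eq_nil_iff] at hr; cases hr
        | cons w ws => exact ⟨w, ws, rfl⟩
      rw [hrev, restrict_catList] at hd'
      have hfr : (w :: ws).filter (· ∈ Y) = (z :: zs).reverse := by
        rw [← hrev, List.filter_reverse, hf]
      obtain ⟨v, vs, hrv⟩ : ∃ v vs, (z :: zs).reverse = v :: vs := by
        cases hr : (z :: zs).reverse with
        | nil => rw [List.reverse_eq_nil_iff] at hr; cases hr
        | cons v vs => exact ⟨v, vs, rfl⟩
      rw [hrv] at hfr
      rw [hfr] at hd'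
      have hd'' : d' = catList (v :: vs) := (Option.some_injective _ hd').symm
      subst hd''
      -- chain of isomorphisms
      have hfinal : Iso (catList (z :: zs)) (catList (z :: zs).reverse) := by
        rw [hrv]
        exact (hisoc.symm.trans hiso).trans hisod
      -- cardinality of the filtered list
      have hndm : (z :: zs).Nodup := by rw [← hf]; exact hnd.filter _
      have hYm : Y ⊆ (z :: zs).toFinset := by
        intro y hy
        rw [List.mem_toFinset, ← hf, List.mem_filter]
        have := hYI y hy
        rw [List.mem_toFinset] at this
        simp [this, hy]
      have hYlen : Y.card ≤ (z :: zs).length := by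
        calc Y.card ≤ (z :: zs).toFinset.card := Finset.card_le_card hYm
        _ ≤ (z :: zs).length := List.toFinset_card_le _
      exact noIso_catList_reverse hndm (by omega) hfinal

theorem key {S T : PTree α} {k : ℕ} (hphS : Phylo S) (hphT : Phylo T)
    (hblocks : ∀ s t, Subtree s S → Subtree t T → Perfect k s → Perfect k t →
      AntiCat s t) :
    ∀ (n a b : ℕ) (S' T' : PTree α) (Y : Finset α), a + b = n →
      Subtree S' S → Subtree T' T → Perfect a S' → Perfect b T' →
      k ≤ a → k ≤ b → Agree S' T' Y →
      Y.card ≤ 2 * max (2 ^ (a - k)) (2 ^ (b - k)) := by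
  intro n
  induction n using Nat.strong_induction_on with
  | _ n IH =>
  intro a b S' T' Y hab hsubS hsubT hPa hPb hka hkb hAg
  by_cases hak : k < a
  · -- the first tree splits
    cases hPa with
    | leaf => omega
    | @node m S1 S2 hP1 hP2 =>
      have hsub1 : Subtree S1 S := (Subtree.left (Subtree.refl S1)).trans hsubS
      have hsub2 : Subtree S2 S := (Subtree.right (Subtree.refl S2)).trans hsubS
      have hkm : k ≤ m := by omega
      have e1 : 2 ^ (m + 1 - k) = 2 * 2 ^ (m - k) := by
        have : m + 1 - k = (m - k) + 1 := by omega
        rw [this, pow_succ]; ring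
      have e2 : 1 ≤ 2 ^ (m - k) := Nat.one_le_two_pow
      cases h1 : S1.restrict Y with
      | none =>
          have hred := agree_node_left_none hAg h1
          have hb := IH (m + b) (by omega) m b S2 T' Y rfl hsub2 hsubT hP2 hPb hkm hkb hred
          have e3 : 1 ≤ 2 ^ (b - k) := Nat.one_le_two_pow
          omega
      | some A1 =>
        cases h2 : S2.restrict Y with
        | none =>
            have hred := agree_node_right_none hAg h2
            have hb := IH (m + b) (by omega) m b S1 T' Y rfl hsub1 hsubT hP1 hPb hkm hkb hred
            have e3 : 1 ≤ 2 ^ (b - k) := Nat.one_le_two_pow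
            omega
        | some A2 =>
          have hphS' : Phylo (node S1 S2) := hphS.subtree hsubS
          have hAgc := hAg
          obtain ⟨hsub, Sr, Tr, hSr, hTr, hiso⟩ := hAgc
          have hcard : Y.card = (Y ∩ S1.leaves).card + (Y ∩ S2.leaves).card :=
            card_split hphS' (fun x hx => (Finset.mem_inter.mp (hsub hx)).1)
          by_cases hbk : k < b
          · -- the second tree splits as well
            cases hPb with
            | leaf => omega
            | @node mb T1 T2 hQ1 hQ2 =>
              have hsubt1 : Subtree T1 T := (Subtree.left (Subtree.refl T1)).trans hsubT
              have hsubt2 : Subtree T2 T := (Subtree.right (Subtree.refl T2)).trans hsubT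
              have hkmb : k ≤ mb := by omega
              have f1 : 2 ^ (mb + 1 - k) = 2 * 2 ^ (mb - k) := by
                have : mb + 1 - k = (mb - k) + 1 := by omega
                rw [this, pow_succ]; ring
              have f2 : 1 ≤ 2 ^ (mb - k) := Nat.one_le_two_pow
              cases hT1 : T1.restrict Y with
              | none =>
                  have hred := agree_snd_left_none hAg hT1
                  have hb := IH (m + 1 + mb) (by omega) (m+1) mb (node S1 S2) T2 Y rfl
                    hsubS hsubt2 (Perfect.node hP1 hP2) hQ2 (by omega) hkmb hred
                  omega
              | some C1 =>
                cases hT2 : T2.restrict Y with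
                | none =>
                    have hred := agree_snd_right_none hAg hT2
                    have hb := IH (m + 1 + mb) (by omega) (m+1) mb (node S1 S2) T1 Y rfl
                      hsubS hsubt1 (Perfect.node hP1 hP2) hQ1 (by omega) hkmb hred
                    omega
                | some C2 =>
                  have hphT' : Phylo (node T1 T2) := hphT.subtree hsubT
                  have hdisjT := phylo_node_disjoint hphT'
                  have hTB : (node T1 T2).restrict Y = some (node C1 C2) := by
                    rw [restrict_node_eq, hT1, hT2]
                  obtain ⟨B1, B2, D1, D2, hBeq, hDD, hAg1, hAg2, hTD1, hIso1, hTD2, hIso2⟩ :=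
                    agree_split hphS' hAg h1 h2 hTB
                  injection hBeq with hbe1 hbe2
                  subst hbe1; subst hbe2
                  -- membership characterizations of the pieces
                  have hmY1 : ∀ x, x ∈ (Y ∩ S1.leaves) ↔ x ∈ A1.leafList := by
                    intro x
                    rw [mem_restrict_leafList h1, Finset.mem_inter, mem_leaves]
                    tauto
                  have hmY2 : ∀ x, x ∈ (Y ∩ S2.leaves) ↔ x ∈ A2.leafList := by
                    intro x
                    rw [mem_restrict_leafList h2, Finset.mem_inter, mem_leaves]
                    tauto
                  have hmC1 : ∀ x, x ∈ C1.leafList ↔ x ∈ T1.leafList ∧ x ∈ Y :=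
                    fun x => mem_restrict_leafList hT1
                  have hmC2 : ∀ x, x ∈ C2.leafList ↔ x ∈ T2.leafList ∧ x ∈ Y :=
                    fun x => mem_restrict_leafList hT2
                  rcases hDD with ⟨hd1, hd2⟩ | ⟨hd1, hd2⟩
                  · -- D1 = C1, D2 = C2
                    subst hd1; subst hd2
                    have hnone1 : T2.restrict (Y ∩ S1.leaves) = none := by
                      rw [restrict_eq_none_iff]
                      intro x hx hx'
                      have hxc : x ∈ D1.leafList := by
                        rw [← hIso1.perm.mem_iff]
                        exact (hmY1 x).mp hx'
                      exact hdisjT x ((hmC1 x).mp hxc).1 hx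
                    have hnone2 : T1.restrict (Y ∩ S2.leaves) = none := by
                      rw [restrict_eq_none_iff]
                      intro x hx hx'
                      have hxc : x ∈ D2.leafList := by
                        rw [← hIso2.perm.mem_iff]
                        exact (hmY2 x).mp hx'
                      exact hdisjT x hx ((hmC2 x).mp hxc).1
                    have hA1' := agree_snd_right_none hAg1 hnone1
                    have hA2' := agree_snd_left_none hAg2 hnone2
                    have hb1 := IH (m + mb) (by omega) m mb S1 T1 (Y ∩ S1.leaves) rfl
                      hsub1 hsubt1 hP1 hQ1 hkm hkmb hA1'
                    have hb2 := IH (m + mb) (by omega) m mb S2 T2 (Y ∩ S2.leaves) rfl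
                      hsub2 hsubt2 hP2 hQ2 hkm hkmb hA2'
                    omega
                  · -- D1 = C2, D2 = C1
                    subst hd1; subst hd2
                    have hnone1 : T1.restrict (Y ∩ S1.leaves) = none := by
                      rw [restrict_eq_none_iff]
                      intro x hx hx'
                      have hxc : x ∈ D1.leafList := by
                        rw [← hIso1.perm.mem_iff]
                        exact (hmY1 x).mp hx'
                      exact hdisjT x hx ((hmC2 x).mp hxc).1
                    have hnone2 : T2.restrict (Y ∩ S2.leaves) = none := by
                      rw [restrict_eq_none_iff]
                      intro x hx hx'
                      have hxc : x ∈ D2.leafList := by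
                        rw [← hIso2.perm.mem_iff]
                        exact (hmY2 x).mp hx'
                      exact hdisjT x ((hmC1 x).mp hxc).1 hx
                    have hA1' := agree_snd_left_none hAg1 hnone1
                    have hA2' := agree_snd_right_none hAg2 hnone2
                    have hb1 := IH (m + mb) (by omega) m mb S1 T2 (Y ∩ S1.leaves) rfl
                      hsub1 hsubt2 hP1 hQ2 hkm hkmb hA1'
                    have hb2 := IH (m + mb) (by omega) m mb S2 T1 (Y ∩ S2.leaves) rfl
                      hsub2 hsubt1 hP2 hQ1 hkm hkmb hA2'
                    omega
          · -- b = k : only the first tree splits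
            have hbk' : b = k := by omega
            obtain ⟨B1, B2, D1, D2, hBeq, hDD, hAg1, hAg2, hTD1, hIso1, hTD2, hIso2⟩ :=
              agree_split hphS' hAg h1 h2 hTr
            have hb1 := IH (m + b) (by omega) m b S1 T' (Y ∩ S1.leaves) rfl
              hsub1 hsubT hP1 hPb hkm hkb hAg1
            have hb2 := IH (m + b) (by omega) m b S2 T' (Y ∩ S2.leaves) rfl
              hsub2 hsubT hP2 hPb hkm hkb hAg2
            have e3 : 2 ^ (b - k) = 1 := by rw [hbk']; simp
            omega
  · -- a = k
    have hak' : a = k := by omega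
    by_cases hbk : k < b
    · -- only the second tree splits
      cases hPb with
      | leaf => omega
      | @node mb T1 T2 hQ1 hQ2 =>
        have hsubt1 : Subtree T1 T := (Subtree.left (Subtree.refl T1)).trans hsubT
        have hsubt2 : Subtree T2 T := (Subtree.right (Subtree.refl T2)).trans hsubT
        have hkmb : k ≤ mb := by omega
        have f1 : 2 ^ (mb + 1 - k) = 2 * 2 ^ (mb - k) := by
          have : mb + 1 - k = (mb - k) + 1 := by omega
          rw [this, pow_succ]; ring
        have f2 : 1 ≤ 2 ^ (mb - k) := Nat.one_le_two_pow
        have e3 : 2 ^ (a - k) = 1 := by rw [hak']; simp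
        cases hT1 : T1.restrict Y with
        | none =>
            have hred := agree_snd_left_none hAg hT1
            have hb := IH (a + mb) (by omega) a mb S' T2 Y rfl hsubS hsubt2 hPa hQ2
              hka hkmb hred
            omega
        | some C1 =>
          cases hT2 : T2.restrict Y with
          | none =>
              have hred := agree_snd_right_none hAg hT2
              have hb := IH (a + mb) (by omega) a mb S' T1 Y rfl hsubS hsubt1 hPa hQ1
                hka hkmb hred
              omega
          | some C2 =>
            have hphT' : Phylo (node T1 T2) := hphT.subtree hsubT
            have hAgc := agree_symm hAg
            obtain ⟨hsub, Sr, Tr, hSr, hTr, hiso⟩ := hAg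
            have hcard : Y.card = (Y ∩ T1.leaves).card + (Y ∩ T2.leaves).card :=
              card_split hphT' (fun x hx => (Finset.mem_inter.mp (hsub hx)).2)
            obtain ⟨B1, B2, D1, D2, hBeq, hDD, hAg1, hAg2, hTD1, hIso1, hTD2, hIso2⟩ :=
              agree_split hphT' hAgc hT1 hT2 hSr
            have hb1 := IH (a + mb) (by omega) a mb S' T1 (Y ∩ T1.leaves) rfl
              hsubS hsubt1 hPa hQ1 hka hkmb (agree_symm hAg1)
            have hb2 := IH (a + mb) (by omega) a mb S' T2 (Y ∩ T2.leaves) rfl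
              hsubS hsubt2 hPa hQ2 hka hkmb (agree_symm hAg2)
            omega
    · -- a = k and b = k : base case
      have hbk' : b = k := by omega
      have hanti := hblocks S' T' hsubS hsubT (hak' ▸ hPa) (hbk' ▸ hPb)
      have hbase := card_le_two_of_antiCat hanti hAg
      have e3 : 2 ^ (a - k) = 1 := by rw [hak']; simp
      have e4 : 2 ^ (b - k) = 1 := by rw [hbk']; simp
      omega

end Key
end PTree
end PhyloMAST

open PhyloMAST PTree
/-- If `S` and `T` are balanced phylogenetic trees consisting
of `p` (resp. `q`) leaf-disjoint pendant subtrees of size `2 ^ k`, every pair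
of which overlaps in exactly `r` labels and restricts to a pair of
anti-caterpillars, then `mast S T ≤ 2 * max p q`. -/
theorem mast_le_of_antiCaterpillar_overlaps {α : Type} [DecidableEq α] [Inhabited α]
    (k p q r : ℕ) (hk : 0 < k) (hp : 0 < p) (hq : 0 < q) (hr : 0 < r)
    (S T : PTree α) (hS : Phylo S) (hT : Phylo T)
    (hbS : Balanced S) (hbT : Balanced T)
    (hScard : S.leaves.card = p * 2 ^ k) (hTcard : T.leaves.card = q * 2 ^ k)
    (SS : Fin p → PTree α) (TT : Fin q → PTree α)
    (hSSsub : ∀ i, Subtree (SS i) S) (hTTsub : ∀ j, Subtree (TT j) T)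
    (hSScard : ∀ i, (SS i).leaves.card = 2 ^ k)
    (hTTcard : ∀ j, (TT j).leaves.card = 2 ^ k)
    (hSSdisj : ∀ i i', i ≠ i' → Disjoint (SS i).leaves (SS i').leaves)
    (hTTdisj : ∀ j j', j ≠ j' → Disjoint (TT j).leaves (TT j').leaves)
    (hSSunion : (Finset.univ.biUnion fun i => (SS i).leaves) = S.leaves)
    (hTTunion : (Finset.univ.biUnion fun j => (TT j).leaves) = T.leaves)
    (hoverlap : ∀ i j, ((SS i).leaves ∩ (TT j).leaves).card = r)
    (hanti : ∀ i j, ∃ l : List α, l.Nodup ∧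
      l.toFinset = (SS i).leaves ∩ (TT j).leaves ∧
      (∃ A, (SS i).restrict ((SS i).leaves ∩ (TT j).leaves) = some A ∧
        Iso A (catList l)) ∧
      (∃ B, (TT j).restrict ((SS i).leaves ∩ (TT j).leaves) = some B ∧
        Iso B (catList l.reverse))) :
    mast S T ≤ 2 * max p q := by
  classical
  have hPS : Perfect S.height S := hbS.perfect
  have hPT : Perfect T.height T := hbT.perfect
  -- every perfect height-k pendant subtree of S is one of the given blocks
  have hfindS : ∀ s, Subtree s S → Perfect k s → ∃ i, s = SS i := by
    intro s hsub hPk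
    have hphs : Phylo s := hS.subtree hsub
    have hlen : s.leafList.length = 2 ^ k := hPk.length
    obtain ⟨x, hx⟩ := List.exists_mem_of_ne_nil _ (leafList_ne_nil s)
    have hxS : x ∈ S.leaves := mem_leaves.mpr (hsub.sublist.mem hx)
    rw [← hSSunion] at hxS
    obtain ⟨i, _, hxi⟩ := Finset.mem_biUnion.mp hxS
    refine ⟨i, ?_⟩
    have hcards : s.leaves.card = 2 ^ k := by
      rw [show s.leaves = s.leafList.toFinset from rfl,
        List.toFinset_card_of_nodup hphs, hlen]
    have heq : s.leaves = (SS i).leaves := by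
      rcases subtree_laminar hS hsub (hSSsub i) with hsub' | hsub' | hdisj
      · apply Finset.eq_of_subset_of_card_le
        · intro y hy
          exact mem_leaves.mpr (hsub' y (mem_leaves.mp hy))
        · exact ((hSScard i).trans hcards.symm).le
      · refine (Finset.eq_of_subset_of_card_le ?_ (hcards.trans (hSScard i).symm).le).symm
        intro y hy
        exact mem_leaves.mpr (hsub' y (mem_leaves.mp hy))
      · exact absurd (mem_leaves.mp hxi) (hdisj x hx)
    exact subtree_eq_of_leafList hS hsub (hSSsub i)
      (fun y => by rw [← mem_leaves, ← mem_leaves, heq])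
  have hfindT : ∀ t, Subtree t T → Perfect k t → ∃ j, t = TT j := by
    intro t hsub hPk
    have hpht : Phylo t := hT.subtree hsub
    have hlen : t.leafList.length = 2 ^ k := hPk.length
    obtain ⟨x, hx⟩ := List.exists_mem_of_ne_nil _ (leafList_ne_nil t)
    have hxT : x ∈ T.leaves := mem_leaves.mpr (hsub.sublist.mem hx)
    rw [← hTTunion] at hxT
    obtain ⟨j, _, hxj⟩ := Finset.mem_biUnion.mp hxT
    refine ⟨j, ?_⟩
    have hcards : t.leaves.card = 2 ^ k := by
      rw [show t.leaves = t.leafList.toFinset from rfl,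
        List.toFinset_card_of_nodup hpht, hlen]
    have heq : t.leaves = (TT j).leaves := by
      rcases subtree_laminar hT hsub (hTTsub j) with hsub' | hsub' | hdisj
      · apply Finset.eq_of_subset_of_card_le
        · intro y hy
          exact mem_leaves.mpr (hsub' y (mem_leaves.mp hy))
        · exact ((hTTcard j).trans hcards.symm).le
      · refine (Finset.eq_of_subset_of_card_le ?_ (hcards.trans (hTTcard j).symm).le).symm
        intro y hy
        exact mem_leaves.mpr (hsub' y (mem_leaves.mp hy))
      · exact absurd (mem_leaves.mp hxj) (hdisj x hx)
    exact subtree_eq_of_leafList hT hsub (hTTsub j)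
      (fun y => by rw [← mem_leaves, ← mem_leaves, heq])
  have hblocks : ∀ s t, Subtree s S → Subtree t T → Perfect k s → Perfect k t →
      AntiCat s t := by
    intro s t hs ht hps hpt
    obtain ⟨i, rfl⟩ := hfindS s hs hps
    obtain ⟨j, rfl⟩ := hfindT t ht hpt
    exact hanti i j
  -- identify p and q with powers of two
  have hcS : S.leaves.card = S.leafList.length := List.toFinset_card_of_nodup hS
  have hcT : T.leaves.card = T.leafList.length := List.toFinset_card_of_nodup hT
  have hpk : p * 2 ^ k = 2 ^ S.height := by rw [← hScard, hcS, hbS]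
  have hqk : q * 2 ^ k = 2 ^ T.height := by rw [← hTcard, hcT, hbT]
  have hkhS : k ≤ S.height := by
    have h1 : 2 ^ k ≤ 2 ^ S.height := by
      calc 2 ^ k = 1 * 2 ^ k := (one_mul _).symm
      _ ≤ p * 2 ^ k := Nat.mul_le_mul_right _ hp
      _ = 2 ^ S.height := hpk
    exact (Nat.pow_le_pow_iff_right (by norm_num : 1 < 2)).mp h1
  have hkhT : k ≤ T.height := by
    have h1 : 2 ^ k ≤ 2 ^ T.height := by
      calc 2 ^ k = 1 * 2 ^ k := (one_mul _).symm
      _ ≤ q * 2 ^ k := Nat.mul_le_mul_right _ hq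
      _ = 2 ^ T.height := hqk
    exact (Nat.pow_le_pow_iff_right (by norm_num : 1 < 2)).mp h1
  have hpeq : p = 2 ^ (S.height - k) := by
    have h2 : 2 ^ S.height = 2 ^ (S.height - k) * 2 ^ k := by
      rw [← pow_add]
      congr 1
      omega
    exact Nat.eq_of_mul_eq_mul_right (pow_pos (by norm_num) k) (hpk.trans h2)
  have hqeq : q = 2 ^ (T.height - k) := by
    have h2 : 2 ^ T.height = 2 ^ (T.height - k) * 2 ^ k := by
      rw [← pow_add]
      congr 1
      omega
    exact Nat.eq_of_mul_eq_mul_right (pow_pos (by norm_num) k) (hqk.trans h2)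
  rw [mast]
  apply csSup_le'
  rintro m ⟨Y, hAgY, rfl⟩
  have hbound := key hS hT hblocks (S.height + T.height) S.height T.height S T Y rfl
    (Subtree.refl S) (Subtree.refl T) hPS hPT hkhS hkhT hAgY
  rw [hpeq, hqeq]
  exact hbound
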